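/- Let T be a triangulated category with a t-structure (T^{≥0}, T^{≤0}). The t-structure is split (meaning that for every object X the connecting map δ_X in the truncation triangle X → X^+ → X^- → X[1] can be chosen to be zero) if and only if Hom(T^{>0}, T^{<0}) = 0. -/

import Mathlib

/-!
STATEMENT 2: A t-structure `(T^{≥0}, T^{≤0})` on a triangulated category is split (for every
object `X` the truncation triangle `X → X⁺ → X⁻ → X⟦1⟧`, with `X⁺ ∈ T^{>0}` and
`X⁻ ∈ T^{<0}`, can be chosen with zero connecting morphism `δ_X : X⁺ → X⁻`) if and only if
`Hom(T^{>0}, T^{<0}) = 0`.  Here `T^{>0} = T^{≥1}` and `T^{<0} = T^{≤-1}`.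
-/

open CategoryTheory Category Limits Pretriangulated Triangulated

section Aux

variable {C : Type*} [Category C] [Preadditive C] [HasZeroObject C] [HasShift C ℤ]
    [∀ n : ℤ, (shiftFunctor C n).Additive] [Pretriangulated C]

/-- The general vanishing `Hom(T^{≤a}, T^{≥b}) = 0` for `a < b`. -/
lemma tStructure_hom_zero (t : TStructure C) {a b : ℤ} (hab : a < b) {X Y : C}
    (hX : t.le a X) (hY : t.ge b Y) (f : X ⟶ Y) : f = 0 := by
  have h1 : t.le 0 (X⟦a⟧) := t.le_shift a a 0 (by omega) X hX
  have h2 : t.ge 1 (Y⟦a⟧) := by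
    have h3 : t.ge (b - a) (Y⟦a⟧) := t.ge_shift b a (b - a) (by omega) Y hY
    exact t.ge_antitone (show (1 : ℤ) ≤ b - a by omega) _ h3
  have hz : f⟦a⟧' = 0 := t.zero' (f⟦a⟧') h1 h2
  apply (shiftFunctor C a).map_injective
  rw [hz, Functor.map_zero]

end Aux

theorem tStructure_split_iff_hom_vanishes
    {C : Type*} [Category C] [Preadditive C] [HasZeroObject C] [HasShift C ℤ]
    [∀ n : ℤ, (shiftFunctor C n).Additive] [Pretriangulated C]
    (t : TStructure C) :
    (∀ X : C, ∃ (P Q : C) (_ : t.ge 1 P) (_ : t.le (-1) Q)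
        (f : X ⟶ P) (h : Q ⟶ X⟦(1 : ℤ)⟧),
        Triangle.mk f (0 : P ⟶ Q) h ∈ distTriang C) ↔
      (∀ (X Y : C), t.ge 1 X → t.le (-1) Y → ∀ f : X ⟶ Y, f = 0) := by
  constructor
  · -- split → Hom(T^{>0}, T^{<0}) = 0
    intro hsplit X Y hX hY f
    -- complete `f` to a triangle `X ⟶ Y ⟶ W ⟶ X⟦1⟧` and inverse-rotate it
    obtain ⟨W, g, h, mem⟩ := distinguished_cocone_triangle f
    set T' := (Triangle.mk f g h).invRotate with hT'
    have mem' : T' ∈ distTriang C := inv_rot_of_distTriang _ mem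
    -- the fiber of `f`
    set M : C := T'.obj₁ with hM
    -- the split truncation triangle of `M`
    obtain ⟨P, Q, hP, hQ, α, β, memPQ⟩ := hsplit M
    -- a section `s` of `α : M ⟶ P`
    obtain ⟨s, hs⟩ := Triangle.coyoneda_exact₂ _ memPQ (𝟙 P) (by exact comp_zero)
    change P ⟶ M at s
    change 𝟙 P = s ≫ α at hs
    -- `(𝟙 M - α ≫ s) ≫ T'.mor₁ = 0`
    have key₁ : (𝟙 M - α ≫ s) ≫ T'.mor₁ = 0 := by
      have hzero : (𝟙 M - α ≫ s) ≫ α = 0 := by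
        simp only [Preadditive.sub_comp, id_comp, assoc, ← hs, comp_id, sub_self]
      obtain ⟨m', hm'⟩ := Triangle.coyoneda_exact₂ _
        (inv_rot_of_distTriang _ memPQ) (𝟙 M - α ≫ s) hzero
      rw [hm']; refine (assoc _ _ _).trans ?_
      have : (Triangle.mk α (0 : P ⟶ Q) β).invRotate.mor₁ ≫ T'.mor₁ = 0 := by
        apply tStructure_hom_zero t (show (0 : ℤ) < 1 by omega) _ hX
        exact t.le_shift (-1) (-1) 0 (by omega) Q hQ
      erw [this, comp_zero]
    -- `T'.mor₃ ≫ (α ≫ s)⟦1⟧' = 0`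
    have key₂ : T'.mor₃ ≫ (α ≫ s)⟦(1 : ℤ)⟧' = 0 := by
      rw [Functor.map_comp, ← assoc]
      have : T'.mor₃ ≫ α⟦(1 : ℤ)⟧' = 0 := by
        apply tStructure_hom_zero t (show (-1 : ℤ) < 0 by omega) hY
        exact t.ge_shift 1 1 0 (by omega) P hP
      rw [this, zero_comp]
    -- complete `(𝟙 M - α ≫ s, 0)` to a morphism of triangles `T' ⟶ T'`
    obtain ⟨c, hc₁, hc₂⟩ := complete_distinguished_triangle_morphism T' T' mem' mem'
      (𝟙 M - α ≫ s) (0 : X ⟶ X) (by exact comp_zero.trans key₁.symm)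
    change Y ⟶ Y at c
    -- from the third commutation, `c ≫ T'.mor₃ = T'.mor₃`
    have hc₃ : (𝟙 Y - c) ≫ T'.mor₃ = 0 := by
      have : T'.mor₃ ≫ (𝟙 M - α ≫ s)⟦(1 : ℤ)⟧' = T'.mor₃ := by
        rw [Functor.map_sub, Preadditive.comp_sub, key₂, sub_zero,
          CategoryTheory.Functor.map_id, comp_id]
      erw [Preadditive.sub_comp, id_comp, ← hc₂, this, sub_self]
    -- hence `𝟙 Y - c` factors through `f : X ⟶ Y`, but `Hom(Y, X) = 0`
    obtain ⟨u, hu⟩ := Triangle.coyoneda_exact₃ _ mem' (𝟙 Y - c) hc₃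
    have hu0 : u = 0 := tStructure_hom_zero t (show (-1 : ℤ) < 1 by omega) hY hX u
    have hc : c = 𝟙 Y := by
      have h0 : 𝟙 Y - c = 0 := by rw [hu, hu0]; exact zero_comp
      rw [sub_eq_zero] at h0
      exact h0.symm
    -- from the second commutation, `f ≫ c = 0`, so `f = 0`
    have : f ≫ c = 0 := by
      have h2 : T'.mor₂ = f := rfl
      exact hc₁.trans zero_comp
    rwa [hc, comp_id] at this
  · -- Hom(T^{>0}, T^{<0}) = 0 → split
    intro hvan X
    obtain ⟨A, B, hA, hB, i, p, δ, mem⟩ := t.exists_triangle_zero_one X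
    have hA' : t.le (-1) (A⟦(1 : ℤ)⟧) := t.le_shift 0 1 (-1) (by omega) A hA
    have hδ : δ = 0 := hvan B (A⟦(1 : ℤ)⟧) hB hA' δ
    refine ⟨B, A⟦(1 : ℤ)⟧, hB, hA', p, -i⟦(1 : ℤ)⟧', ?_⟩
    have := rot_of_distTriang _ mem
    rw [hδ] at this
    exact this
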